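/- For every k, j ∈ {1,2}, every real parameters a, c, and every Q ≠ P in ℝ², the Laplacian in Q of the parameterized family satisfies ∇² H̃^{a,c}_{kj}(Q,P) = Ũ_{kj}(Q,P) + (4a + 32c − 1) δ_{kj}, where Ũ_{kj}(Q,P) = −δ_{kj} log r + R_k R_j/r². -/

import Mathlib

open Real

/-- Partial derivative of a scalar function on ℝ² with respect to the `l`-th coordinate. -/
noncomputable def pd2 (f : EuclideanSpace ℝ (Fin 2) → ℝ) (l : Fin 2)
    (Q : EuclideanSpace ℝ (Fin 2)) : ℝ :=
  fderiv ℝ f Q (EuclideanSpace.single l 1)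

/-- The parameterized 2D family
H̃^{a,c}_{kj}(Q,P) = δ_{kj} r² (a − (1/2) log r) + ∂²/∂q_k∂q_j [ r⁴ (c + (1/32) log r) ]. -/
noncomputable def Hac (P : EuclideanSpace ℝ (Fin 2)) (a c : ℝ) (k j : Fin 2)
    (Q : EuclideanSpace ℝ (Fin 2)) : ℝ :=
  (if k = j then (1 : ℝ) else 0) * ‖Q - P‖ ^ 2 * (a - (1 / 2) * Real.log ‖Q - P‖) +
    pd2 (fun Q' =>
      pd2 (fun Q'' => ‖Q'' - P‖ ^ 4 * (c + (1 / 32) * Real.log ‖Q'' - P‖)) j Q') k Q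

noncomputable abbrev E2 := EuclideanSpace ℝ (Fin 2)

variable {P Q : E2}

lemma hasF_s (P Q : E2) : HasFDerivAt (fun x : E2 => ‖x - P‖ ^ 2)
    ((2:ℝ) • (innerSL ℝ (Q - P))) Q := by
  have h := ((hasFDerivAt_id Q).sub_const P).norm_sq
  refine h.congr_fderiv ?_
  ext v
  simp [two_smul]

lemma eval_inner (P Q : E2) (l : Fin 2) :
    (innerSL ℝ (Q - P)) (EuclideanSpace.single l 1) = (Q - P) l := by
  rw [innerSL_apply_apply, EuclideanSpace.inner_single_right]; simp

lemma hasF_coord (P Q : E2) (m : Fin 2) :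
    HasFDerivAt (fun x : E2 => (x - P) m) (EuclideanSpace.proj m : E2 →L[ℝ] ℝ) Q := by
  have : (fun x : E2 => (x - P) m) = fun x : E2 => (EuclideanSpace.proj m : E2 →L[ℝ] ℝ) x - P m := by
    funext x; simp [EuclideanSpace.proj]
  rw [this]
  exact ((EuclideanSpace.proj m : E2 →L[ℝ] ℝ).hasFDerivAt).sub_const _

lemma eval_coord (m l : Fin 2) :
    (EuclideanSpace.proj m : E2 →L[ℝ] ℝ) (EuclideanSpace.single l 1) = if m = l then 1 else 0 := by
  simp [EuclideanSpace.proj, EuclideanSpace.single_apply]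

lemma s_ne (hQ : Q ≠ P) : ‖Q - P‖ ^ 2 ≠ 0 :=
  pow_ne_zero 2 (norm_ne_zero_iff.mpr (sub_ne_zero.mpr hQ))

lemma hasF_L (hQ : Q ≠ P) : HasFDerivAt (fun x : E2 => Real.log (‖x - P‖ ^ 2))
    ((‖Q - P‖ ^ 2)⁻¹ • ((2:ℝ) • innerSL ℝ (Q - P))) Q :=
  by exact (Real.hasDerivAt_log (s_ne hQ)).comp_hasFDerivAt Q (hasF_s P Q)

lemma hasF_Sinv (hQ : Q ≠ P) : HasFDerivAt (fun x : E2 => (‖x - P‖ ^ 2)⁻¹)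
    ((-((‖Q - P‖ ^ 2) ^ 2)⁻¹) • ((2:ℝ) • innerSL ℝ (Q - P))) Q :=
  (hasDerivAt_inv (s_ne hQ)).comp_hasFDerivAt Q (hasF_s P Q)

lemma pd2_eq_of_hasF {f : E2 → ℝ} {D : E2 →L[ℝ] ℝ} (h : HasFDerivAt f D Q) (l : Fin 2) :
    pd2 f l Q = D (EuclideanSpace.single l 1) := by rw [pd2, h.fderiv]

lemma pd2_congr {f g : E2 → ℝ} (h : Set.EqOn f g {x | x ≠ P}) (hQ : Q ≠ P) (l : Fin 2) :
    pd2 f l Q = pd2 g l Q := by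
  have hev : f =ᶠ[nhds Q] g :=
    Filter.eventuallyEq_of_mem (isOpen_ne.mem_nhds hQ) h
  rw [pd2, pd2, hev.fderiv_eq]

-- Step 1
lemma step1 (c : ℝ) (j : Fin 2) (hQ : Q ≠ P) :
    pd2 (fun x => ‖x - P‖ ^ 4 * (c + (1 / 32) * Real.log ‖x - P‖)) j Q =
      (Q - P) j * (4 * c * ‖Q - P‖ ^ 2 + ‖Q - P‖ ^ 2 * Real.log (‖Q - P‖ ^ 2) * (1/16)
        + ‖Q - P‖ ^ 2 * (1/32)) := by
  have hfe : (fun x : E2 => ‖x - P‖ ^ 4 * (c + (1 / 32) * Real.log ‖x - P‖)) =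
      fun x : E2 => ‖x - P‖ ^ 2 * ‖x - P‖ ^ 2 * (c + (1/64) * Real.log (‖x - P‖ ^ 2)) := by
    funext x
    have : Real.log (‖x - P‖ ^ 2) = 2 * Real.log ‖x - P‖ := by
      rw [Real.log_pow]; norm_num
    rw [this]; ring
  rw [hfe]
  have hD := ((hasF_s P Q).mul (hasF_s P Q)).mul
    (((hasF_L hQ).const_mul (1/64 : ℝ)).const_add c)
  erw [pd2_eq_of_hasF hD]
  simp only [ContinuousLinearMap.add_apply, ContinuousLinearMap.smul_apply, smul_eq_mul,
    eval_inner, Pi.mul_apply, Pi.add_apply, Pi.sub_apply]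
  have hne := s_ne hQ
  set S := ‖Q - P‖ ^ 2 with hS
  set L := Real.log S with hL
  set R := (Q - P) j with hR
  field_simp
  ring

-- Step 2
lemma Hac_eq (a c : ℝ) (k j : Fin 2) (hQ : Q ≠ P) :
    Hac P a c k j Q =
      (if k = j then (1:ℝ) else 0) *
        ((a + 4*c + 1/32) * ‖Q - P‖ ^ 2 - 3/16 * (‖Q - P‖ ^ 2 * Real.log (‖Q - P‖ ^ 2))) +
      (Q - P) k * (Q - P) j * (8*c + Real.log (‖Q - P‖ ^ 2) * (1/8) + 3/16) := by
  rw [Hac]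
  have hcongr := pd2_congr (P := P) (Q := Q)
    (f := fun Q' => pd2 (fun Q'' => ‖Q'' - P‖ ^ 4 * (c + (1 / 32) * Real.log ‖Q'' - P‖)) j Q')
    (g := fun x => (x - P) j * (4 * c * ‖x - P‖ ^ 2 + ‖x - P‖ ^ 2 * Real.log (‖x - P‖ ^ 2) * (1/16)
        + ‖x - P‖ ^ 2 * (1/32)))
    (fun x hx => step1 c j hx) hQ k
  rw [hcongr]
  have hD := (hasF_coord P Q j).mul
    ((((hasF_s P Q).const_mul (4*c)).add (((hasF_s P Q).mul (hasF_L hQ)).mul_const (1/16))).add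
      ((hasF_s P Q).mul_const (1/32)))
  erw [pd2_eq_of_hasF hD]
  have hlog : Real.log ‖Q - P‖ = Real.log (‖Q - P‖ ^ 2) / 2 := by
    rw [Real.log_pow]; norm_num
  rw [hlog]
  simp only [ContinuousLinearMap.add_apply, ContinuousLinearMap.smul_apply, smul_eq_mul,
    eval_inner, eval_coord, Pi.mul_apply, Pi.add_apply, Pi.sub_apply]
  have hne := s_ne hQ
  set S := ‖Q - P‖ ^ 2 with hS
  set L := Real.log S with hL
  set Rk := (Q - P) k with hRk
  set Rj := (Q - P) j with hRj
  rcases eq_or_ne k j with h | h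
  · subst h; simp only [if_pos rfl]
    field_simp
    ring
  · simp only [if_neg h, if_neg (Ne.symm h)]
    field_simp
    ring

-- Step 3
lemma step3 (a c : ℝ) (k j l : Fin 2) (hQ : Q ≠ P) :
    pd2 (Hac P a c k j) l Q =
      (if k = j then (1:ℝ) else 0) *
          (2 * (Q - P) l * ((a + 4*c + 1/32) - 3/16 * (1 + Real.log (‖Q - P‖ ^ 2))))
      + (Q - P) k * (Q - P) j * ((Q - P) l * (‖Q - P‖ ^ 2)⁻¹) * (1/4)
      + ((if k = l then (1:ℝ) else 0) * (Q - P) j + (if j = l then (1:ℝ) else 0) * (Q - P) k) *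
          (8*c + Real.log (‖Q - P‖ ^ 2) * (1/8) + 3/16) := by
  have hcongr := pd2_congr (P := P) (Q := Q)
    (f := Hac P a c k j)
    (g := fun x => (if k = j then (1:ℝ) else 0) *
        ((a + 4*c + 1/32) * ‖x - P‖ ^ 2 - 3/16 * (‖x - P‖ ^ 2 * Real.log (‖x - P‖ ^ 2))) +
      (x - P) k * (x - P) j * (8*c + Real.log (‖x - P‖ ^ 2) * (1/8) + 3/16))
    (fun x hx => Hac_eq a c k j hx) hQ l
  rw [hcongr]
  have hψ := (((hasF_s P Q).const_mul (a + 4*c + 1/32)).sub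
    (((hasF_s P Q).mul (hasF_L hQ)).const_mul (3/16)))
  have hχ := (((hasF_L hQ).mul_const (1/8)).const_add (8*c)).add_const (3/16)
  have hD := (hψ.const_mul (if k = j then (1:ℝ) else 0)).add
    (((hasF_coord P Q k).mul (hasF_coord P Q j)).mul hχ)
  erw [pd2_eq_of_hasF hD]
  simp only [ContinuousLinearMap.add_apply, ContinuousLinearMap.sub_apply,
    ContinuousLinearMap.smul_apply, smul_eq_mul, eval_inner, eval_coord, Pi.mul_apply,
    Pi.add_apply, Pi.sub_apply]
  clear hcongr hD hψ hχ
  generalize (if k = j then (1:ℝ) else 0) = d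
  generalize (if k = l then (1:ℝ) else 0) = e1
  generalize (if j = l then (1:ℝ) else 0) = e2
  generalize Real.log (‖Q - P‖ ^ 2) = L
  generalize (Q - P) k = Rk
  generalize (Q - P) j = Rj
  generalize (Q - P) l = Rl
  generalize hSg : ‖Q - P‖ ^ 2 = S
  have hne : S ≠ 0 := hSg ▸ s_ne hQ
  field_simp
  ring

-- Step 4
lemma step4 (a c : ℝ) (k j l : Fin 2) (hQ : Q ≠ P) :
    pd2 (fun y => pd2 (Hac P a c k j) l y) l Q =
      (if k = j then (1:ℝ) else 0) *
          (2 * ((a + 4*c + 1/32) - 3/16 * (1 + Real.log (‖Q - P‖ ^ 2)))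
            - (3/4) * (Q - P) l ^ 2 * (‖Q - P‖ ^ 2)⁻¹)
      + ((Q - P) k * (Q - P) j * ((‖Q - P‖ ^ 2)⁻¹ - 2 * (Q - P) l ^ 2 * ((‖Q - P‖ ^ 2) ^ 2)⁻¹)
          + ((if k = l then (1:ℝ) else 0) * (Q - P) j + (if j = l then (1:ℝ) else 0) * (Q - P) k)
            * (Q - P) l * (‖Q - P‖ ^ 2)⁻¹) * (1/4)
      + ((if k = l then (1:ℝ) else 0) * (Q - P) j + (if j = l then (1:ℝ) else 0) * (Q - P) k)
          * (Q - P) l * (‖Q - P‖ ^ 2)⁻¹ * (1/4)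
      + (8*c + Real.log (‖Q - P‖ ^ 2) * (1/8) + 3/16) *
          (2 * (if k = l then (1:ℝ) else 0) * (if j = l then (1:ℝ) else 0)) := by
  have hcongr := pd2_congr (P := P) (Q := Q)
    (f := pd2 (Hac P a c k j) l)
    (g := fun x => (if k = j then (1:ℝ) else 0) *
          (2 * (x - P) l * ((a + 4*c + 1/32) - 3/16 * (1 + Real.log (‖x - P‖ ^ 2))))
      + (x - P) k * (x - P) j * ((x - P) l * (‖x - P‖ ^ 2)⁻¹) * (1/4)
      + ((if k = l then (1:ℝ) else 0) * (x - P) j + (if j = l then (1:ℝ) else 0) * (x - P) k) *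
          (8*c + Real.log (‖x - P‖ ^ 2) * (1/8) + 3/16))
    (fun x hx => step3 a c k j l hx) hQ l
  rw [hcongr]
  have hχ := (((hasF_L hQ).mul_const (1/8)).const_add (8*c)).add_const (3/16)
  have hT1 := (((hasF_coord P Q l).const_mul 2).mul
    ((((hasF_L hQ).const_add 1).const_mul (3/16)).const_sub (a + 4*c + 1/32))).const_mul
    (if k = j then (1:ℝ) else 0)
  have hT2 := (((hasF_coord P Q k).mul (hasF_coord P Q j)).mul
    ((hasF_coord P Q l).mul (hasF_Sinv hQ))).mul_const (1/4)
  have hT3 := (((hasF_coord P Q j).const_mul (if k = l then (1:ℝ) else 0)).add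
    ((hasF_coord P Q k).const_mul (if j = l then (1:ℝ) else 0))).mul hχ
  have hD := (hT1.add hT2).add hT3
  erw [pd2_eq_of_hasF hD]
  simp only [ContinuousLinearMap.add_apply, ContinuousLinearMap.sub_apply,
    ContinuousLinearMap.smul_apply, ContinuousLinearMap.neg_apply, smul_eq_mul,
    eval_inner, eval_coord, Pi.mul_apply, Pi.add_apply, Pi.sub_apply]
  simp only [eq_self_iff_true, if_true]
  clear hcongr hD hT1 hT2 hT3 hχ
  generalize (if k = j then (1:ℝ) else 0) = d
  generalize (if k = l then (1:ℝ) else 0) = e1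
  generalize (if j = l then (1:ℝ) else 0) = e2
  generalize Real.log (‖Q - P‖ ^ 2) = L
  generalize (Q - P) k = Rk
  generalize (Q - P) j = Rj
  generalize (Q - P) l = Rl
  generalize hSg : ‖Q - P‖ ^ 2 = S
  have hne : S ≠ 0 := hSg ▸ s_ne hQ
  field_simp
  ring


set_option maxHeartbeats 2000000 in
/-- ∇² H̃^{a,c}_{kj}(Q,P) = Ũ_{kj}(Q,P) + (4a + 32c − 1) δ_{kj} for all Q ≠ P, where
Ũ_{kj}(Q,P) = −δ_{kj} log r + R_k R_j/r². -/
theorem twoD_parameterized_laplacian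
    (P : EuclideanSpace ℝ (Fin 2)) (k j : Fin 2) (a c : ℝ)
    (Q : EuclideanSpace ℝ (Fin 2)) (hQ : Q ≠ P) :
    (∑ l : Fin 2, pd2 (fun Q' => pd2 (Hac P a c k j) l Q') l Q) =
      (-(if k = j then (1 : ℝ) else 0) * Real.log ‖Q - P‖ +
          (Q - P) k * (Q - P) j / ‖Q - P‖ ^ 2) +
        (4 * a + 32 * c - 1) * (if k = j then (1 : ℝ) else 0) := by
  rw [Fin.sum_univ_two, step4 a c k j 0 hQ, step4 a c k j 1 hQ,
    show Real.log ‖Q - P‖ = Real.log (‖Q - P‖ ^ 2) / 2 by rw [Real.log_pow]; norm_num]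
  have hsum : ‖Q - P‖ ^ 2 = (Q - P) 0 ^ 2 + (Q - P) 1 ^ 2 := by
    rw [EuclideanSpace.norm_eq]
    rw [Real.sq_sqrt (by positivity)]
    rw [Fin.sum_univ_two]
    simp [sq_abs]
  have hne : (Q - P) 0 ^ 2 + (Q - P) 1 ^ 2 ≠ 0 := hsum ▸ s_ne hQ
  rw [hsum]
  fin_cases k <;> fin_cases j <;>
    simp only [Fin.isValue, reduceIte, one_mul, zero_mul, mul_zero, mul_one, zero_add,
      add_zero, neg_zero, Fin.zero_eta, Fin.mk_one, Fin.reduceEq] <;>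
  · revert hne
    generalize Real.log ((Q - P) 0 ^ 2 + (Q - P) 1 ^ 2) = L
    generalize (Q - P) 0 = R0
    generalize (Q - P) 1 = R1
    intro hne
    field_simp
    ring
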